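/- (Uniqueness of the moving frame.) Let D ⊆ ℝ² be open and connected and let A, B : D → Mat₄ₓ₄(ℝ) be continuous. If 𝓕₁, 𝓕₂ : D → Mat₄ₓ₄(ℝ) are C¹ maps both satisfying ∂_u 𝓕ᵢ = A·𝓕ᵢ and ∂_v 𝓕ᵢ = B·𝓕ᵢ on D, and 𝓕₁(p₀) = 𝓕₂(p₀) at some point p₀ ∈ D, then 𝓕₁ = 𝓕₂ on all of D. -/

import Mathlib

noncomputable section

/-- ℝ⁴ as the space of quadruples of reals. -/
abbrev V4 := Fin 4 → ℝ

/-- The Minkowski inner product of signature (3,1) on ℝ⁴. -/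
def mink (p q : V4) : ℝ := p 0 * q 0 + p 1 * q 1 + p 2 * q 2 - p 3 * q 3

/-- Partial derivative with respect to the first coordinate `u` of `ℝ × ℝ`. -/
def pu {E : Type*} [NormedAddCommGroup E] [NormedSpace ℝ E]
    (g : ℝ × ℝ → E) (p : ℝ × ℝ) : E := fderiv ℝ g p (1, 0)

/-- Partial derivative with respect to the second coordinate `v` of `ℝ × ℝ`. -/
def pv {E : Type*} [NormedAddCommGroup E] [NormedSpace ℝ E]
    (g : ℝ × ℝ → E) (p : ℝ × ℝ) : E := fderiv ℝ g p (0, 1)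

open Set Metric

noncomputable instance : NormedAddCommGroup (Matrix (Fin 4) (Fin 4) ℝ) :=
  Matrix.normedAddCommGroup
instance : NormedSpace ℝ (Matrix (Fin 4) (Fin 4) ℝ) := Matrix.normedSpace

/-- Entrywise sup norm bound on products of 4×4 matrices. -/
lemma mul_norm_bound4 (P Q : Matrix (Fin 4) (Fin 4) ℝ) : ‖P * Q‖ ≤ 4 * ‖P‖ * ‖Q‖ := by
  rw [Matrix.norm_le_iff (by positivity)]
  intro i j
  rw [Matrix.mul_apply]
  calc ‖∑ k, P i k * Q k j‖ ≤ ∑ k, ‖P i k * Q k j‖ := norm_sum_le _ _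
    _ ≤ ∑ _k : Fin 4, ‖P‖ * ‖Q‖ := Finset.sum_le_sum fun k _ => by
        rw [norm_mul]
        exact mul_le_mul (Matrix.norm_entry_le_entrywise_sup_norm P)
          (Matrix.norm_entry_le_entrywise_sup_norm Q) (norm_nonneg _) (norm_nonneg _)
    _ = 4 * ‖P‖ * ‖Q‖ := by simp [Finset.sum_const]; ring

/-- Uniqueness for the linear matrix ODE `f' = M t * f` along a segment. -/
lemma ode_unique_seg (a c : ℝ) (f g : ℝ → Matrix (Fin 4) (Fin 4) ℝ)
    (M : ℝ → Matrix (Fin 4) (Fin 4) ℝ)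
    (C : ℝ) (hC : ∀ t ∈ uIcc a c, ‖M t‖ ≤ C)
    (hf : ∀ t ∈ uIcc a c, HasDerivAt f (M t * f t) t)
    (hg : ∀ t ∈ uIcc a c, HasDerivAt g (M t * g t) t)
    (h : f a = g a) : f c = g c := by
  have hC0 : 0 ≤ C := le_trans (norm_nonneg _) (hC a left_mem_uIcc)
  set clamp : ℝ → ℝ := fun t => max (min a c) (min t (max a c)) with hclamp
  have hclmem : ∀ t, clamp t ∈ uIcc a c := by
    intro t
    rw [uIcc]
    constructor
    · exact le_max_left _ _
    · exact max_le inf_le_sup (min_le_right _ _)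
  have hcleq : ∀ t ∈ uIcc a c, clamp t = t := by
    intro t ht
    rw [uIcc] at ht
    simp only [hclamp]
    rw [min_eq_left ht.2, max_eq_right ht.1]
  set v : ℝ → Matrix (Fin 4) (Fin 4) ℝ → Matrix (Fin 4) (Fin 4) ℝ :=
    fun t x => M (clamp t) * x with hv_def
  have hv : ∀ t, LipschitzWith (Real.toNNReal (4 * C)) (v t) := by
    intro t
    apply LipschitzWith.of_dist_le_mul
    intro x y
    rw [dist_eq_norm, dist_eq_norm, hv_def]
    simp only
    rw [← mul_sub]
    calc ‖M (clamp t) * (x - y)‖ ≤ 4 * ‖M (clamp t)‖ * ‖x - y‖ := mul_norm_bound4 _ _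
      _ ≤ (Real.toNNReal (4 * C)) * ‖x - y‖ := by
          rw [Real.coe_toNNReal _ (by positivity)]
          have := hC _ (hclmem t)
          nlinarith [norm_nonneg (x - y), norm_nonneg (M (clamp t))]
  have hvf : ∀ t ∈ uIcc a c, v t (f t) = M t * f t := fun t ht => by
    simp only [hv_def, hcleq t ht]
  have hvg : ∀ t ∈ uIcc a c, v t (g t) = M t * g t := fun t ht => by
    simp only [hv_def, hcleq t ht]
  rcases le_total a c with hac | hca
  · rw [uIcc_of_le hac] at hf hg hvf hvg
    have := ODE_solution_unique hv
      (fun t ht => (hf t ht).continuousAt.continuousWithinAt)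
      (fun t ht => by rw [hvf t (Ico_subset_Icc_self ht)]
                      exact ((hf t (Ico_subset_Icc_self ht))).hasDerivWithinAt)
      (fun t ht => (hg t ht).continuousAt.continuousWithinAt)
      (fun t ht => by rw [hvg t (Ico_subset_Icc_self ht)]
                      exact ((hg t (Ico_subset_Icc_self ht))).hasDerivWithinAt)
      h
    exact this (right_mem_Icc.2 hac)
  · rw [uIcc_of_ge hca] at hf hg hvf hvg
    have := ODE_solution_unique_of_mem_Icc_left
      (s := fun _ => (univ : Set (Matrix (Fin 4) (Fin 4) ℝ)))
      (fun t _ => (hv t).lipschitzOnWith)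
      (fun t ht => (hf t ht).continuousAt.continuousWithinAt)
      (fun t ht => by
        have h1 := hf t (Ioc_subset_Icc_self ht)
        rw [hvf t (Ioc_subset_Icc_self ht)]
        exact h1.hasDerivWithinAt)
      (fun _ _ => trivial)
      (fun t ht => (hg t ht).continuousAt.continuousWithinAt)
      (fun t ht => by
        have h1 := hg t (Ioc_subset_Icc_self ht)
        rw [hvg t (Ioc_subset_Icc_self ht)]
        exact h1.hasDerivWithinAt)
      (fun _ _ => trivial)
      h
    exact this (left_mem_Icc.2 hca)

/-- Slice derivative in the `u` direction. -/
lemma slice_u (D : Set (ℝ × ℝ)) (hD : IsOpen D)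
    (A : ℝ × ℝ → Matrix (Fin 4) (Fin 4) ℝ)
    (F : ℝ × ℝ → Matrix (Fin 4) (Fin 4) ℝ)
    (hFC1 : ∀ i j : Fin 4, ContDiffOn ℝ 1 (fun q => F q i j) D)
    (hFu : ∀ p ∈ D, ∀ i j : Fin 4, pu (fun q => F q i j) p = (A p * F p) i j)
    (p : ℝ × ℝ) (hp : p ∈ D) :
    HasDerivAt (fun t => F (t, p.2)) (A p * F p) p.1 := by
  have hcurve : HasDerivAt (fun t : ℝ => ((t, p.2) : ℝ × ℝ)) ((1 : ℝ), (0 : ℝ)) p.1 :=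
    (hasDerivAt_id p.1).prodMk (hasDerivAt_const p.1 p.2)
  rw [show (HasDerivAt (fun t => F (t, p.2)) (A p * F p) p.1) ↔
      ∀ i, HasDerivAt (fun t => F (t, p.2) i) ((A p * F p) i) p.1 from hasDerivAt_pi]
  intro i
  rw [show (HasDerivAt (fun t => F (t, p.2) i) ((A p * F p) i) p.1) ↔
      ∀ j, HasDerivAt (fun t => F (t, p.2) i j) ((A p * F p) i j) p.1 from hasDerivAt_pi]
  intro j
  have hdiff : DifferentiableAt ℝ (fun q => F q i j) p :=
    ((hFC1 i j).differentiableOn one_ne_zero).differentiableAt (hD.mem_nhds hp)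
  rw [← hFu p hp i j]
  have hL' : HasFDerivAt (fun q => F q i j) (fderiv ℝ (fun q => F q i j) p) (p.1, p.2) := by
    rw [Prod.mk.eta]; exact hdiff.hasFDerivAt
  have := hL'.comp_hasDerivAt p.1 hcurve
  unfold pu; exact this

/-- Slice derivative in the `v` direction. -/
lemma slice_v (D : Set (ℝ × ℝ)) (hD : IsOpen D)
    (B : ℝ × ℝ → Matrix (Fin 4) (Fin 4) ℝ)
    (F : ℝ × ℝ → Matrix (Fin 4) (Fin 4) ℝ)
    (hFC1 : ∀ i j : Fin 4, ContDiffOn ℝ 1 (fun q => F q i j) D)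
    (hFv : ∀ p ∈ D, ∀ i j : Fin 4, pv (fun q => F q i j) p = (B p * F p) i j)
    (p : ℝ × ℝ) (hp : p ∈ D) :
    HasDerivAt (fun s => F (p.1, s)) (B p * F p) p.2 := by
  have hcurve : HasDerivAt (fun s : ℝ => ((p.1, s) : ℝ × ℝ)) ((0 : ℝ), (1 : ℝ)) p.2 :=
    (hasDerivAt_const p.2 p.1).prodMk (hasDerivAt_id p.2)
  rw [show (HasDerivAt (fun s => F (p.1, s)) (B p * F p) p.2) ↔
      ∀ i, HasDerivAt (fun s => F (p.1, s) i) ((B p * F p) i) p.2 from hasDerivAt_pi]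
  intro i
  rw [show (HasDerivAt (fun s => F (p.1, s) i) ((B p * F p) i) p.2) ↔
      ∀ j, HasDerivAt (fun s => F (p.1, s) i j) ((B p * F p) i j) p.2 from hasDerivAt_pi]
  intro j
  have hdiff : DifferentiableAt ℝ (fun q => F q i j) p :=
    ((hFC1 i j).differentiableOn one_ne_zero).differentiableAt (hD.mem_nhds hp)
  rw [← hFv p hp i j]
  have hL' : HasFDerivAt (fun q => F q i j) (fderiv ℝ (fun q => F q i j) p) (p.1, p.2) := by
    rw [Prod.mk.eta]; exact hdiff.hasFDerivAt
  have := hL'.comp_hasDerivAt p.2 hcurve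
  unfold pv; exact this

/-- A bound for a continuous matrix family along a compact segment. -/
lemma seg_bound (D : Set (ℝ × ℝ))
    (A : ℝ × ℝ → Matrix (Fin 4) (Fin 4) ℝ)
    (hAcont : ∀ i j : Fin 4, ContinuousOn (fun q => A q i j) D)
    (γ : ℝ → ℝ × ℝ) (hγ : Continuous γ) (a c : ℝ)
    (hseg : ∀ t ∈ uIcc a c, γ t ∈ D) :
    ∃ C : ℝ, ∀ t ∈ uIcc a c, ‖A (γ t)‖ ≤ C := by
  have hcont : ContinuousOn (fun t => A (γ t)) (uIcc a c) := by
    apply continuousOn_pi.2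
    intro i
    apply continuousOn_pi.2
    intro j
    exact (hAcont i j).comp hγ.continuousOn hseg
  exact isCompact_uIcc.exists_bound_of_continuousOn hcont

/-- Propagation of agreement along an L-shaped path inside `D`. -/
lemma two_step (D : Set (ℝ × ℝ)) (hD : IsOpen D)
    (A B : ℝ × ℝ → Matrix (Fin 4) (Fin 4) ℝ)
    (hAcont : ∀ i j : Fin 4, ContinuousOn (fun q => A q i j) D)
    (hBcont : ∀ i j : Fin 4, ContinuousOn (fun q => B q i j) D)
    (F₁ F₂ : ℝ × ℝ → Matrix (Fin 4) (Fin 4) ℝ)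
    (hF₁C1 : ∀ i j : Fin 4, ContDiffOn ℝ 1 (fun q => F₁ q i j) D)
    (hF₂C1 : ∀ i j : Fin 4, ContDiffOn ℝ 1 (fun q => F₂ q i j) D)
    (hF₁u : ∀ p ∈ D, ∀ i j : Fin 4, pu (fun q => F₁ q i j) p = (A p * F₁ p) i j)
    (hF₁v : ∀ p ∈ D, ∀ i j : Fin 4, pv (fun q => F₁ q i j) p = (B p * F₁ p) i j)
    (hF₂u : ∀ p ∈ D, ∀ i j : Fin 4, pu (fun q => F₂ q i j) p = (A p * F₂ p) i j)
    (hF₂v : ∀ p ∈ D, ∀ i j : Fin 4, pv (fun q => F₂ q i j) p = (B p * F₂ p) i j)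
    (x y : ℝ × ℝ)
    (h1 : ∀ t ∈ uIcc x.1 y.1, ((t, x.2) : ℝ × ℝ) ∈ D)
    (h2 : ∀ s ∈ uIcc x.2 y.2, ((y.1, s) : ℝ × ℝ) ∈ D)
    (hx : F₁ x = F₂ x) : F₁ y = F₂ y := by
  obtain ⟨C, hC⟩ := seg_bound D A hAcont (fun t => (t, x.2))
    (continuous_id.prodMk continuous_const) x.1 y.1 h1
  have step1 : F₁ (y.1, x.2) = F₂ (y.1, x.2) := by
    apply ode_unique_seg x.1 y.1 (fun t => F₁ (t, x.2)) (fun t => F₂ (t, x.2))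
      (fun t => A (t, x.2)) C hC
    · exact fun t ht => slice_u D hD A F₁ hF₁C1 hF₁u (t, x.2) (h1 t ht)
    · exact fun t ht => slice_u D hD A F₂ hF₂C1 hF₂u (t, x.2) (h1 t ht)
    · simpa only [Prod.mk.eta] using hx
  obtain ⟨C', hC'⟩ := seg_bound D B hBcont (fun s => (y.1, s))
    (continuous_const.prodMk continuous_id) x.2 y.2 h2
  have step2 : F₁ (y.1, y.2) = F₂ (y.1, y.2) := by
    apply ode_unique_seg x.2 y.2 (fun s => F₁ (y.1, s)) (fun s => F₂ (y.1, s))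
      (fun s => B (y.1, s)) C' hC'
    · exact fun s hs => slice_v D hD B F₁ hF₁C1 hF₁v (y.1, s) (h2 s hs)
    · exact fun s hs => slice_v D hD B F₂ hF₂C1 hF₂v (y.1, s) (h2 s hs)
    · exact step1
  simpa only [Prod.mk.eta] using step2

/-- Uniqueness of the moving frame.  Two C¹ solutions of the linear
system `∂_u 𝓕 = A·𝓕`, `∂_v 𝓕 = B·𝓕` on an open connected set `D` that agree at one
point agree everywhere on `D`. -/
theorem moving_frame_unique
    (D : Set (ℝ × ℝ)) (hD : IsOpen D) (hDconn : IsConnected D)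
    (A B : ℝ × ℝ → Matrix (Fin 4) (Fin 4) ℝ)
    (hAcont : ∀ i j : Fin 4, ContinuousOn (fun q => A q i j) D)
    (hBcont : ∀ i j : Fin 4, ContinuousOn (fun q => B q i j) D)
    (F₁ F₂ : ℝ × ℝ → Matrix (Fin 4) (Fin 4) ℝ)
    (hF₁C1 : ∀ i j : Fin 4, ContDiffOn ℝ 1 (fun q => F₁ q i j) D)
    (hF₂C1 : ∀ i j : Fin 4, ContDiffOn ℝ 1 (fun q => F₂ q i j) D)
    (hF₁u : ∀ p ∈ D, ∀ i j : Fin 4, pu (fun q => F₁ q i j) p = (A p * F₁ p) i j)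
    (hF₁v : ∀ p ∈ D, ∀ i j : Fin 4, pv (fun q => F₁ q i j) p = (B p * F₁ p) i j)
    (hF₂u : ∀ p ∈ D, ∀ i j : Fin 4, pu (fun q => F₂ q i j) p = (A p * F₂ p) i j)
    (hF₂v : ∀ p ∈ D, ∀ i j : Fin 4, pv (fun q => F₂ q i j) p = (B p * F₂ p) i j)
    (p₀ : ℝ × ℝ) (hp₀ : p₀ ∈ D)
    (hinit : F₁ p₀ = F₂ p₀) :
    ∀ p ∈ D, F₁ p = F₂ p := by
  have hball : ∀ x : ℝ × ℝ, ∀ ε > (0:ℝ), ball x ε ⊆ D → ∀ q ∈ ball x ε,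
      (F₁ x = F₂ x ↔ F₁ q = F₂ q) := by
    intro x ε hε hsub q hq
    rw [mem_ball, Prod.dist_eq, max_lt_iff, Real.dist_eq, Real.dist_eq] at hq
    constructor
    · intro hx
      apply two_step D hD A B hAcont hBcont F₁ F₂ hF₁C1 hF₂C1 hF₁u hF₁v hF₂u hF₂v x q
        ?_ ?_ hx
      · intro t ht
        apply hsub
        rw [mem_ball, Prod.dist_eq, Real.dist_eq, Real.dist_eq]
        simp only [sub_self, abs_zero]
        exact max_lt (lt_of_le_of_lt (abs_sub_left_of_mem_uIcc ht) hq.1) hε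
      · intro s hs
        apply hsub
        rw [mem_ball, Prod.dist_eq, Real.dist_eq, Real.dist_eq]
        exact max_lt hq.1 (lt_of_le_of_lt (abs_sub_left_of_mem_uIcc hs) hq.2)
    · intro hqe
      apply two_step D hD A B hAcont hBcont F₁ F₂ hF₁C1 hF₂C1 hF₁u hF₁v hF₂u hF₂v q x
        ?_ ?_ hqe
      · intro t ht
        apply hsub
        rw [mem_ball, Prod.dist_eq, Real.dist_eq, Real.dist_eq]
        refine max_lt ?_ hq.2
        calc |t - x.1| = |x.1 - t| := abs_sub_comm _ _
          _ ≤ |x.1 - q.1| := abs_sub_right_of_mem_uIcc ht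
          _ = |q.1 - x.1| := abs_sub_comm _ _
          _ < ε := hq.1
      · intro s hs
        apply hsub
        rw [mem_ball, Prod.dist_eq, Real.dist_eq, Real.dist_eq]
        simp only [sub_self, abs_zero]
        refine max_lt hε ?_
        calc |s - x.2| = |x.2 - s| := abs_sub_comm _ _
          _ ≤ |x.2 - q.2| := abs_sub_right_of_mem_uIcc hs
          _ = |q.2 - x.2| := abs_sub_comm _ _
          _ < ε := hq.2
  have hU : IsOpen {x : ℝ × ℝ | x ∈ D ∧ F₁ x = F₂ x} := by
    rw [Metric.isOpen_iff]
    rintro x ⟨hxD, hxe⟩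
    obtain ⟨ε, hε, hsub⟩ := Metric.isOpen_iff.mp hD x hxD
    exact ⟨ε, hε, fun q hq => ⟨hsub hq, (hball x ε hε hsub q hq).1 hxe⟩⟩
  have hT : IsOpen {x : ℝ × ℝ | x ∈ D ∧ F₁ x ≠ F₂ x} := by
    rw [Metric.isOpen_iff]
    rintro x ⟨hxD, hxe⟩
    obtain ⟨ε, hε, hsub⟩ := Metric.isOpen_iff.mp hD x hxD
    exact ⟨ε, hε, fun q hq => ⟨hsub hq, fun h => hxe ((hball x ε hε hsub q hq).2 h)⟩⟩
  intro p hp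
  by_contra hne
  obtain ⟨x, _, ⟨_, hx2⟩, _, hx4⟩ := hDconn.isPreconnected _ _ hU hT
    (fun x hx => by by_cases h : F₁ x = F₂ x
                    · exact Or.inl ⟨hx, h⟩
                    · exact Or.inr ⟨hx, h⟩)
    ⟨p₀, hp₀, hp₀, hinit⟩ ⟨p, hp, hp, hne⟩
  exact hx4 hx2
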